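/- arXiv:1007.1593 — 4 statements merged into one kernel-verified Lean document; each statement's English description precedes it below -/
import Mathlib

section
/- If a point p of S is dominated by some point q belonging to layer i of the maxima layers of S, then p belongs to some layer j with j > i. -/
open scoped Classical

def dominates {d : ℕ} (q p : Fin d → ℝ) : Prop := p ≤ q ∧ q ≠ p

noncomputable def maxima {d : ℕ} (S : Finset (Fin d → ℝ)) : Finset (Fin d → ℝ) :=
  S.filter fun p => ¬ ∃ q ∈ S, dominates q p

noncomputable def residLom {d : ℕ} (S : Finset (Fin d → ℝ)) : ℕ → Finset (Fin d → ℝ)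
  | 0 => S
  | i + 1 => residLom S i \ maxima (residLom S i)

noncomputable def layer {d : ℕ} (S : Finset (Fin d → ℝ)) (i : ℕ) : Finset (Fin d → ℝ) :=
  maxima (residLom S i)

lemma maxima_nonempty {d : ℕ} {T : Finset (Fin d → ℝ)} (h : T.Nonempty) :
    (maxima T).Nonempty := by
  obtain ⟨m, hm, hmax⟩ := T.exists_maximal h
  refine ⟨m, Finset.mem_filter.mpr ⟨hm, ?_⟩⟩
  rintro ⟨r, hr, hle, hne⟩
  exact hne (le_antisymm (hmax hr hle) hle)

lemma maxima_subset {d : ℕ} (T : Finset (Fin d → ℝ)) : maxima T ⊆ T :=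
  Finset.filter_subset _ _

lemma residLom_anti {d : ℕ} (S : Finset (Fin d → ℝ)) {k j : ℕ} (h : k ≤ j) :
    residLom S j ⊆ residLom S k := by
  induction j with
  | zero => simp [Nat.le_zero.mp h]
  | succ n ih =>
    rcases Nat.lt_or_ge k (n+1) with hlt | hge
    · exact (Finset.sdiff_subset : residLom S (n+1) ⊆ residLom S n).trans
        (ih (Nat.lt_succ_iff.mp hlt))
    · have : k = n+1 := le_antisymm h hge
      subst this; exact Finset.Subset.refl _

lemma residLom_card {d : ℕ} (S : Finset (Fin d → ℝ)) :
    ∀ k, (residLom S k).Nonempty → (residLom S k).card + k ≤ S.card := by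
  intro k
  induction k with
  | zero => intro _; simp [residLom]
  | succ n ih =>
    intro h
    have hne : (residLom S n).Nonempty :=
      h.mono (Finset.sdiff_subset : residLom S (n+1) ⊆ residLom S n)
    have hlt : (residLom S (n+1)).card < (residLom S n).card := by
      apply Finset.card_lt_card
      show residLom S n \ maxima (residLom S n) ⊂ residLom S n
      rw [Finset.ssubset_iff_of_subset Finset.sdiff_subset]
      obtain ⟨m, hm⟩ := maxima_nonempty hne
      exact ⟨m, maxima_subset _ hm, by simp [residLom, hm]⟩
    have := ih hne
    omega

/-- If a point `p` of `S` is dominated by a point `q` in layer `i`, then `p` belongs to a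
layer `j` with `j > i`. -/
theorem stmt2 {d : ℕ} (S : Finset (Fin d → ℝ)) (p q : Fin d → ℝ) (i : ℕ)
    (hp : p ∈ S) (hq : q ∈ layer S i) (hdom : dominates q p) :
    ∃ j : ℕ, i < j ∧ p ∈ layer S j := by
  have hqresid : q ∈ residLom S i := maxima_subset _ hq
  -- p stays in residuals through level i+1
  have hstay : ∀ j ≤ i + 1, p ∈ residLom S j := by
    intro j hj
    induction j with
    | zero => simpa [residLom] using hp
    | succ n ih =>
      have hn : n ≤ i := Nat.lt_succ_iff.mp hj
      have hpn : p ∈ residLom S n := ih (le_trans (Nat.le_succ n) hj)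
      have hqn : q ∈ residLom S n := residLom_anti S hn hqresid
      have hpnot : p ∉ maxima (residLom S n) := by
        intro hmem
        exact (Finset.mem_filter.mp hmem).2 ⟨q, hqn, hdom⟩
      simp only [residLom, Finset.mem_sdiff]
      exact ⟨hpn, hpnot⟩
  -- p eventually leaves the residuals
  have hout : p ∉ residLom S (S.card + 1) := by
    intro hmem
    have := residLom_card S (S.card + 1) ⟨p, hmem⟩
    have hcard : 1 ≤ (residLom S (S.card + 1)).card := Finset.card_pos.mpr ⟨p, hmem⟩
    omega
  classical
  have hP : ∃ k, p ∉ residLom S k := ⟨S.card + 1, hout⟩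
  set k₀ := Nat.find hP with hk₀
  have hk₀spec : p ∉ residLom S k₀ := Nat.find_spec hP
  have hk₀gt : i + 1 < k₀ := by
    by_contra h
    push_neg at h
    exact hk₀spec (residLom_anti S h (hstay (i+1) le_rfl))
  have hk₀pos : 0 < k₀ := by omega
  obtain ⟨j, hj⟩ : ∃ j, k₀ = j + 1 := ⟨k₀ - 1, by omega⟩
  rw [hj] at hk₀spec
  have hpj : p ∈ residLom S j := by
    by_contra h
    exact absurd (Nat.find_min hP (show j < k₀ by omega)) (by simpa using h)
  have : p ∈ maxima (residLom S j) := by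
    by_contra h
    exact hk₀spec (by simp [residLom, Finset.mem_sdiff, hpj, h])
  exact ⟨j, by omega, this⟩
end

section
/- If a point p of S dominates some point q belonging to layer k of the maxima layers of S, then p belongs to some layer j with j ≤ k. -/
open scoped Classical

lemma aux_layer {d : ℕ} (S : Finset (Fin d → ℝ)) (p : Fin d → ℝ) :
    ∀ k : ℕ, p ∈ S → p ∉ residLom S (k + 1) → ∃ j : ℕ, j ≤ k ∧ p ∈ layer S j := by
  intro k
  induction k with
  | zero =>
    intro hp h1
    refine ⟨0, le_refl _, ?_⟩
    simp only [layer, residLom] at *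
    by_contra hm
    exact h1 (Finset.mem_sdiff.mpr ⟨hp, hm⟩)
  | succ k ih =>
    intro hp h1
    by_cases hmem : p ∈ residLom S (k + 1)
    · refine ⟨k + 1, le_refl _, ?_⟩
      by_contra hm
      exact h1 (Finset.mem_sdiff.mpr ⟨hmem, hm⟩)
    · obtain ⟨j, hj, hpj⟩ := ih hp hmem
      exact ⟨j, le_trans hj (Nat.le_succ _), hpj⟩

/-- If a point `p` of `S` dominates a point `q` in layer `k`, then `p` belongs to a layer
`j` with `j ≤ k`. -/
theorem stmt3 {d : ℕ} (S : Finset (Fin d → ℝ)) (p q : Fin d → ℝ) (k : ℕ)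
    (hp : p ∈ S) (hq : q ∈ layer S k) (hdom : dominates p q) :
    ∃ j : ℕ, j ≤ k ∧ p ∈ layer S j := by
  apply aux_layer S p k hp
  intro hmem
  have hpk : p ∈ residLom S k := (Finset.mem_sdiff.mp hmem).1
  have hqf := Finset.mem_filter.mp hq
  exact hqf.2 ⟨p, hpk, hdom⟩
end

section
/- Staircases are nested (Fact 1): if the projections P_i(v) and P_j(v) of layers i < j are both nonempty, then for any x-value at which both 2D staircases (upper-right boundaries of dominated regions) are defined, the staircase of layer i lies strictly above or equal to that of layer j; formally, if a vertical line x = c intersects staircase M_i at y-coordinate p.y and staircase M_j at q.y with i < j, then p.y > q.y. -/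
open scoped Classical

/-- Fact 1 (staircases are nested): if every point of `Q` (the projected layer `j`) is
2D-dominated by some point of `P` (the projected layer `i`, `i < j`), the points have
pairwise distinct y-coordinates, and the vertical line `x = c` cuts the staircase of `Q`,
then the staircase of `P` is strictly above that of `Q` at `x = c` (heights compared as
`Finset.max` in `WithBot ℝ`). -/
theorem stmt9 (P Q : Finset (ℝ × ℝ)) (c : ℝ)
    (hdom : ∀ q ∈ Q, ∃ p ∈ P, q.1 ≤ p.1 ∧ q.2 ≤ p.2)
    (hy : ∀ p ∈ P, ∀ q ∈ Q, p.2 ≠ q.2)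
    (hQ : ∃ q ∈ Q, c ≤ q.1) :
    ((Q.filter fun q => c ≤ q.1).image Prod.snd).max <
      ((P.filter fun p => c ≤ p.1).image Prod.snd).max := by
  obtain ⟨q0, hq0, hcq0⟩ := hQ
  have hne : ((Q.filter fun q => c ≤ q.1).image Prod.snd).Nonempty :=
    ⟨q0.2, Finset.mem_image_of_mem _ (Finset.mem_filter.mpr ⟨hq0, hcq0⟩)⟩
  obtain ⟨y, hy'⟩ := Finset.max_of_nonempty hne
  rw [hy']
  obtain ⟨q, hqmem, hqy⟩ := Finset.mem_image.mp (Finset.mem_of_max hy')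
  obtain ⟨hqQ, hcq⟩ := Finset.mem_filter.mp hqmem
  obtain ⟨p, hpP, hpx, hpy⟩ := hdom q hqQ
  have hlt : y < p.2 := hqy ▸ lt_of_le_of_ne hpy (Ne.symm (hy p hpP q hqQ))
  have hpmem : p.2 ∈ (P.filter fun p => c ≤ p.1).image Prod.snd :=
    Finset.mem_image_of_mem _ (Finset.mem_filter.mpr ⟨hpP, le_trans hcq hpx⟩)
  exact lt_of_lt_of_le (WithBot.coe_lt_coe.mpr hlt) (Finset.le_max hpmem)
end

section
/- A segment s of staircase M_i is the predecessor segment of a query point q (i.e., the first horizontal segment hit by a downward vertical ray from q) if and only if q.x ∈ [left(s), right(s)], q.y ≥ y(s), and staircase M_{i-1} is strictly above q at x-coordinate q.x. -/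
/-- A horizontal segment is a triple `(left, right, y)`. -/
abbrev Seg := ℝ × ℝ × ℝ

/-- The segment `s` covers the x-coordinate `x`. -/
def covers (s : Seg) (x : ℝ) : Prop := s.1 ≤ x ∧ x ≤ s.2.1

/-- Membership in one of the staircases `M 0, …, M (l-1)`. -/
def InM (M : ℕ → Finset Seg) (l : ℕ) (s : Seg) : Prop := ∃ i < l, s ∈ M i

/-- `s` is the predecessor segment of `q`: the highest segment, over all staircases,
covering `q.x` and at or below `q.y`. -/
def IsPred (M : ℕ → Finset Seg) (l : ℕ) (q : ℝ × ℝ) (s : Seg) : Prop :=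
  InM M l s ∧ covers s q.1 ∧ s.2.2 ≤ q.2 ∧
    ∀ t, InM M l t → covers t q.1 → t.2.2 ≤ q.2 → t.2.2 ≤ s.2.2

/-- A segment `s` of staircase `M i` is the predecessor segment of `q` iff
`q.x ∈ [left(s), right(s)]`, `q.y ≥ y(s)`, and staircase `M (i-1)` is strictly above `q`
at `x = q.x` (vacuous for the first staircase). -/
theorem stmt12 (M : ℕ → Finset Seg) (l : ℕ)
    (hnest : ∀ i j, i < j → j < l → ∀ a ∈ M i, ∀ b ∈ M j, ∀ x : ℝ,
      covers a x → covers b x → b.2.2 < a.2.2)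
    (hcover : ∀ i j, i < j → j < l → ∀ b ∈ M j, ∀ x : ℝ,
      covers b x → ∃ a ∈ M i, covers a x)
    (hstep : ∀ i < l, ∀ a ∈ M i, ∀ b ∈ M i, ∀ x : ℝ,
      covers a x → covers b x → a.2.2 = b.2.2)
    (q : ℝ × ℝ) (i : ℕ) (hi : i < l) (s : Seg) (hs : s ∈ M i) :
    IsPred M l q s ↔
      (covers s q.1 ∧ s.2.2 ≤ q.2 ∧
        ∀ j, j + 1 = i → ∀ t ∈ M j, covers t q.1 → q.2 < t.2.2) := by
  constructor
  · rintro ⟨-, hcov, hy, hmax⟩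
    refine ⟨hcov, hy, ?_⟩
    intro j hj t ht htc
    by_contra h
    push_neg at h
    have hjl : j < l := lt_trans (by omega) hi
    have h1 := hmax t ⟨j, hjl, ht⟩ htc h
    have h2 := hnest j i (by omega) hi t ht s hs q.1 htc hcov
    linarith
  · rintro ⟨hcov, hy, habove⟩
    refine ⟨⟨i, hi, hs⟩, hcov, hy, ?_⟩
    rintro t ⟨k, hkl, htk⟩ htc hty
    rcases lt_trichotomy k i with hk | hk | hk
    · -- k < i, so i = (i-1)+1; get a ∈ M (i-1) covering q.1
      have hi1 : i - 1 + 1 = i := by omega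
      obtain ⟨a, ha, hac⟩ := hcover (i - 1) i (by omega) hi s hs q.1 hcov
      have hqa : q.2 < a.2.2 := habove (i - 1) hi1 a ha hac
      rcases eq_or_lt_of_le (by omega : k ≤ i - 1) with hk1 | hk1
      · have := hstep (i-1) (by omega) t (hk1 ▸ htk) a ha q.1 htc hac
        linarith
      · have := hnest k (i - 1) hk1 (by omega) t htk a ha q.1 htc hac
        linarith
    · exact le_of_eq (hstep i hi t (hk ▸ htk) s hs q.1 htc hcov)
    · exact le_of_lt (hnest i k hk hkl s hs t htk q.1 hcov htc)
end
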